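/- Elimination of terminals via constraints: let α be a pattern over Σ ∪ X and r a constraint. Let α' be the pattern obtained from α by replacing every occurrence of each terminal letter a ∈ Σ by a fresh variable x_a (one fresh variable per letter, not occurring in α), and let r' be the constraint that agrees with r on the variables of α and sets r'(x_a) = {a} for each letter a ∈ Σ. Then α' is terminal-free and L_E(α, r) = L_E(α', r') and L_NE(α, r) = L_NE(α', r'). -/

import Mathlib

/-- Patterns over `Σ ∪ X` with variable set `X = ℕ`. -/
abbrev Pattern (σ : Type) := List (σ ⊕ ℕ)

/-- Applying a substitution (determined by its action on variables, and fixing every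
terminal) to a pattern. -/
def applySub {σ : Type} (s : ℕ → List σ) : Pattern σ → List σ
  | [] => []
  | c :: p => Sum.elim (fun a => [a]) s c ++ applySub s p

/-- The set of variables occurring in a pattern. -/
def varsOf {σ : Type} (p : Pattern σ) : Set ℕ := {x | Sum.inr x ∈ p}

/-- A substitution is `r`-valid on `p` if every variable occurring in `p` is mapped into
its constraint language. -/
def Valid {σ : Type} (r : ℕ → Set (List σ)) (p : Pattern σ) (s : ℕ → List σ) : Prop :=
  ∀ x ∈ varsOf p, s x ∈ r x

/-- The erasing constrained pattern language `L_E(p, r)`. -/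
def LangE {σ : Type} (p : Pattern σ) (r : ℕ → Set (List σ)) : Set (List σ) :=
  {w | ∃ s, Valid r p s ∧ applySub s p = w}

/-- The non-erasing constrained pattern language `L_NE(p, r)`. -/
def LangNE {σ : Type} (p : Pattern σ) (r : ℕ → Set (List σ)) : Set (List σ) :=
  {w | ∃ s, Valid r p s ∧ (∀ x ∈ varsOf p, s x ≠ []) ∧ applySub s p = w}

/-- Replace every terminal letter `a` of a pattern by the fresh variable `ν a`. -/
def eliminateTerminals {σ : Type} (ν : σ → ℕ) (α : Pattern σ) : Pattern σ :=
  α.map (Sum.elim (fun a => Sum.inr (ν a)) Sum.inr)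

/-- Elimination of terminals via constraints: replacing each terminal letter `a` by a
fresh variable `x_a` constrained to `{a}` (one fresh variable per letter) yields a
terminal-free pattern with the same erasing and non-erasing constrained languages. -/
lemma varsOf_elim {σ : Type} (ν : σ → ℕ) (α : Pattern σ) (x : ℕ) :
    x ∈ varsOf (eliminateTerminals ν α) ↔
      (∃ a, Sum.inl a ∈ α ∧ x = ν a) ∨ x ∈ varsOf α := by
  simp only [varsOf, eliminateTerminals, Set.mem_setOf_eq, List.mem_map]
  constructor
  · rintro ⟨c, hc, h⟩
    cases c with
    | inl a => exact Or.inl ⟨a, hc, by simpa using h.symm⟩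
    | inr y => exact Or.inr (by simpa using h ▸ hc)
  · rintro (⟨a, ha, rfl⟩ | hx)
    · exact ⟨Sum.inl a, ha, rfl⟩
    · exact ⟨Sum.inr x, hx, rfl⟩

lemma applySub_elim {σ : Type} (ν : σ → ℕ) (s s' : ℕ → List σ) :
    ∀ α : Pattern σ, (∀ a : σ, Sum.inl a ∈ α → s' (ν a) = [a]) →
    (∀ x ∈ varsOf α, s' x = s x) →
    applySub s' (eliminateTerminals ν α) = applySub s α
  | [], _, _ => rfl
  | c :: p, h1, h2 => by
    have ih := applySub_elim ν s s' p
      (fun a ha => h1 a (List.mem_cons_of_mem _ ha))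
      (fun x hx => h2 x (List.mem_cons_of_mem _ hx))
    cases c with
    | inl a =>
      simp [eliminateTerminals, applySub, ih, h1 a List.mem_cons_self]
      exact applySub_elim ν s s' p (fun a ha => h1 a (List.mem_cons_of_mem _ ha))
        (fun x hx => h2 x (List.mem_cons_of_mem _ hx)) ▸ rfl
    | inr x =>
      simp only [eliminateTerminals, List.map_cons, Sum.elim_inr, applySub,
        h2 x List.mem_cons_self]
      rw [show List.map (Sum.elim (fun a => Sum.inr (ν a)) Sum.inr) p
        = eliminateTerminals ν p from rfl, ih]

theorem eliminate_terminals_via_constraints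
    (σ : Type) [Fintype σ] (α : Pattern σ) (r : ℕ → Set (List σ))
    (ν : σ → ℕ) (hν : Function.Injective ν) (hfresh : ∀ a : σ, ν a ∉ varsOf α)
    (r' : ℕ → Set (List σ))
    (hr'char : ∀ a : σ, r' (ν a) = {[a]})
    (hr'agree : ∀ x ∈ varsOf α, r' x = r x) :
    (∀ c ∈ eliminateTerminals ν α, ∃ x : ℕ, c = Sum.inr x) ∧
    LangE α r = LangE (eliminateTerminals ν α) r' ∧
    LangNE α r = LangNE (eliminateTerminals ν α) r' := by
  classical
  have htf : ∀ c ∈ eliminateTerminals ν α, ∃ x : ℕ, c = Sum.inr x := by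
    intro c hc
    simp only [eliminateTerminals, List.mem_map] at hc
    obtain ⟨d, _, rfl⟩ := hc
    cases d with
    | inl a => exact ⟨ν a, rfl⟩
    | inr x => exact ⟨x, rfl⟩
  refine ⟨htf, ?_, ?_⟩
  all_goals {
    ext w
    constructor
    · rintro ⟨s, hs, hrest⟩
      set s' : ℕ → List σ := fun x =>
        if h : ∃ a : σ, ν a = x then [h.choose] else s x with hs'def
      have hsν : ∀ a : σ, s' (ν a) = [a] := by
        intro a
        have h : ∃ b : σ, ν b = ν a := ⟨a, rfl⟩
        have : h.choose = a := hν h.choose_spec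
        simp [hs'def, dif_pos h, this]
      have hsvar : ∀ x ∈ varsOf α, s' x = s x := by
        intro x hx
        have : ¬ ∃ a : σ, ν a = x := by
          rintro ⟨a, rfl⟩; exact hfresh a hx
        simp [hs'def, dif_neg this]
      have hval : Valid r' (eliminateTerminals ν α) s' := by
        intro x hx
        rcases (varsOf_elim ν α x).1 hx with ⟨a, ha, rfl⟩ | hx'
        · rw [hr'char a, hsν a]; rfl
        · rw [hr'agree x hx', hsvar x hx']; exact hs x hx'
      have happ := applySub_elim ν s s' α (fun a _ => hsν a) hsvar
      first
      | exact ⟨s', hval, happ.trans hrest⟩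
      | · refine ⟨s', hval, ?_, happ.trans hrest.2⟩
          intro x hx
          rcases (varsOf_elim ν α x).1 hx with ⟨a, ha, rfl⟩ | hx'
          · rw [hsν a]; simp
          · rw [hsvar x hx']; exact hrest.1 x hx'
    · rintro ⟨s, hs, hrest⟩
      have hsν : ∀ a : σ, Sum.inl a ∈ α → s (ν a) = [a] := by
        intro a ha
        have : ν a ∈ varsOf (eliminateTerminals ν α) :=
          (varsOf_elim ν α (ν a)).2 (Or.inl ⟨a, ha, rfl⟩)
        have := hs _ this
        rw [hr'char a] at this
        exact this
      have hsub : varsOf α ⊆ varsOf (eliminateTerminals ν α) := by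
        intro x hx; exact (varsOf_elim ν α x).2 (Or.inr hx)
      have hval : Valid r α s := by
        intro x hx
        rw [← hr'agree x hx]; exact hs x (hsub hx)
      have happ := applySub_elim ν s s α hsν (fun _ _ => rfl)
      first
      | exact ⟨s, hval, happ ▸ hrest⟩
      | exact ⟨s, hval, fun x hx => hrest.1 x (hsub hx), happ ▸ hrest.2⟩
  }
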